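/- Let N_{t+1} = N_t - 1_{N_t ≥ 1} + n_t with N_1 = 0, where n_t = ⌊(E_source^t + E_t)/P_S⌋ and E_source^{t+1} = E_source^t - n_t·P_S + E_t with E_source^1 = 0. If B_1 = 0 and B_{t+1} = B_t - P_S·1_{B_t ≥ P_S} + E_t, then for all t ≥ 1, N_t = ⌊B_t / P_S⌋. -/

import Mathlib

/-- Energy-packet queue identity N_t = ⌊B_t / P_S⌋ for all t ≥ 1,
where n_t = ⌊(E_source^t + E_t)/P_S⌋, E_source^{t+1} = E_source^t - n_t P_S + E_t,
N_{t+1} = N_t - 1_{N_t ≥ 1} + n_t, B_{t+1} = B_t - P_S·1_{B_t ≥ P_S} + E_t,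
with N_1 = 0, E_source^1 = 0, B_1 = 0. -/
theorem stmt6 (PS : ℝ) (hPS : 0 < PS)
    (E : ℕ → ℝ) (hE : ∀ t, 0 ≤ E t)
    (Esource : ℕ → ℝ) (n : ℕ → ℤ) (N : ℕ → ℤ) (B : ℕ → ℝ)
    (hEs1 : Esource 1 = 0)
    (hn : ∀ t, n t = ⌊(Esource t + E t) / PS⌋)
    (hEs : ∀ t, 1 ≤ t → Esource (t + 1) = Esource t - (n t : ℝ) * PS + E t)
    (hN1 : N 1 = 0)
    (hN : ∀ t, 1 ≤ t → N (t + 1) = N t - (if 1 ≤ N t then 1 else 0) + n t)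
    (hB1 : B 1 = 0)
    (hB : ∀ t, 1 ≤ t → B (t + 1) = B t - (if PS ≤ B t then PS else 0) + E t) :
    ∀ t, 1 ≤ t → N t = ⌊B t / PS⌋ := by
  have key : ∀ t, 1 ≤ t → N t = ⌊B t / PS⌋ ∧ Esource t = B t - (N t : ℝ) * PS := by
    intro t ht
    induction t, ht using Nat.le_induction with
    | base =>
      refine ⟨?_, ?_⟩
      · rw [hN1, hB1]; simp
      · rw [hEs1, hN1, hB1]; simp
    | succ t ht ih =>
      obtain ⟨h1, h2⟩ := ih
      have hnt : n t = ⌊(B t + E t) / PS⌋ - N t := by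
        rw [hn t, h2]
        have heq : (B t - (N t : ℝ) * PS + E t) / PS = (B t + E t) / PS - (N t : ℤ) := by
          field_simp
          ring
        rw [heq, Int.floor_sub_intCast]
      have hiff : (1 ≤ N t) ↔ (PS ≤ B t) := by
        rw [h1, Int.le_floor, le_div_iff₀ hPS]
        push_cast
        rw [one_mul]
      have hfloor : ⌊B (t + 1) / PS⌋ = ⌊(B t + E t) / PS⌋ - (if 1 ≤ N t then 1 else 0) := by
        rw [hB t ht]
        by_cases hc : PS ≤ B t
        · rw [if_pos hc, if_pos (hiff.mpr hc)]
          have heq : (B t - PS + E t) / PS = (B t + E t) / PS - ((1 : ℤ) : ℝ) := by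
            field_simp
            ring
          rw [heq, Int.floor_sub_intCast]
        · rw [if_neg hc, if_neg (fun h => hc (hiff.mp h))]
          ring_nf
      have hN' : N (t + 1) = ⌊B (t + 1) / PS⌋ := by
        rw [hN t ht, hnt, hfloor]; ring
      refine ⟨hN', ?_⟩
      rw [hEs t ht, hB t ht, h2, hN', hfloor, hnt]
      push_cast
      by_cases hc : 1 ≤ N t
      · rw [if_pos hc, if_pos (hiff.mp hc)]; ring
      · rw [if_neg hc, if_neg (fun h => hc (hiff.mpr h))]; ring
  exact fun t ht => (key t ht).1
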